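/- Consider four agents with peaks θ_1 = −4, θ_2 = −3, θ_3 = 3, θ_4 = 4, where agents 1 and 4 propose their own peaks and agents 2 and 3 vote. Then agent 2 has no profitable deviation to proposal-making: (i) agent 2's expected utility from voting is −(1/2)((θ_1 − θ_2)² + (θ_4 − θ_2)²) = −25; (ii) if agent 2 proposes any x̃ that is not strictly closer to θ_3 = 3 than θ_4 = 4 is, then θ_4 is implemented with probability at least 2/3 and agent 2's expected utility is at most −(2/3)(θ_4 − θ_2)² = −98/3 < −25; (iii) if agent 2 proposes any x̃ strictly closer to θ_3 than θ_4, then x̃ > 2θ_3 − θ_4 = 2 and agent 2's expected utility is at most −(1/3)((x̃ − θ_2)² + (θ_4 − θ_2)²) < −99/3 < −25. By the symmetric argument, agent 3 has no profitable deviation either. -/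
import Mathlib


/-- Utility for an agent of type `t` when proposals `a` and `b` are put to a vote
decided by a single (pivotal/median) voter of type `v`: the proposal closer to `v`
wins; a tie is resolved by a fair coin flip. -/
noncomputable def euPair (t v a b : ℝ) : ℝ :=
  if |a - v| < |b - v| then -(a - t) ^ 2
  else if |b - v| < |a - v| then -(b - t) ^ 2
  else (-(a - t) ^ 2 + -(b - t) ^ 2) / 2

/-- Expected utility for an agent of type `t` when three proposals `p, q, r` are
made, two of them are selected uniformly at random (each unordered pair with
probability 1/3) and put to a vote decided by the voter of type `v`. -/
noncomputable def eu3 (t v p q r : ℝ) : ℝ :=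
  (euPair t v p q + euPair t v p r + euPair t v q r) / 3

set_option maxHeartbeats 1000000

/-- Voter part of the counterexample with peaks `θ_1 = -4, θ_2 = -3, θ_3 = 3,
θ_4 = 4`, where agents 1 and 4 propose their own peaks and agents 2, 3 vote.
Agent 2 has no profitable deviation to proposal-making:
(i) agent 2's expected utility from voting is `-(1/2)((θ_1-θ_2)^2 + (θ_4-θ_2)^2) = -25`;
(ii) if agent 2 proposes any `x̃` not strictly closer to `θ_3 = 3` than `θ_4 = 4`
(the remaining voter being agent 3), the expected utility is at most
`-(2/3)(θ_4 - θ_2)^2 = -98/3 < -25`;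
(iii) if agent 2 proposes any `x̃` strictly closer to `θ_3` than `θ_4`, then
`x̃ > 2θ_3 - θ_4 = 2`, and the expected utility is at most
`-(1/3)((x̃ - θ_2)^2 + (θ_4 - θ_2)^2)` and strictly below `-99/3 < -25`.
By the symmetric argument, agent 3 (peak 3, remaining voter agent 2) has no
profitable deviation either. -/
theorem stmt14 :
    -- (i) agent 2's expected utility from voting
    (-(1 / 2) * (((-4 : ℝ) - (-3)) ^ 2 + ((4 : ℝ) - (-3)) ^ 2) = -25) ∧
    -- (ii) proposals not strictly closer to θ₃ than θ₄
    (∀ x : ℝ, ¬ |x - 3| < |(4 : ℝ) - 3| →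
      eu3 (-3) 3 (-4) 4 x ≤ -(2 / 3) * ((4 : ℝ) - (-3)) ^ 2) ∧
    (-(2 / 3) * ((4 : ℝ) - (-3)) ^ 2 = -98 / 3 ∧ (-98 / 3 : ℝ) < -25) ∧
    -- (iii) proposals strictly closer to θ₃ than θ₄
    (∀ x : ℝ, |x - 3| < |(4 : ℝ) - 3| →
      2 < x ∧
      eu3 (-3) 3 (-4) 4 x ≤ -(1 / 3) * ((x - (-3)) ^ 2 + ((4 : ℝ) - (-3)) ^ 2) ∧
      eu3 (-3) 3 (-4) 4 x < -99 / 3) ∧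
    ((-99 / 3 : ℝ) < -25) ∧
    -- symmetric claim: agent 3 has no profitable deviation either
    (-(1 / 2) * (((-4 : ℝ) - 3) ^ 2 + ((4 : ℝ) - 3) ^ 2) = -25) ∧
    (∀ x : ℝ, eu3 3 (-3) (-4) 4 x < -25) := by
  refine ⟨by norm_num, ?_, ⟨by norm_num, by norm_num⟩, ?_, by norm_num, by norm_num, ?_⟩
  · intro x h
    simp only [eu3, euPair, ← sq_lt_sq] at *
    split_ifs at * <;> nlinarith [sq_nonneg (x + 3), sq_nonneg (x - 3)]
  · intro x h
    have hx : 2 < x := by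
      rw [show |(4:ℝ) - 3| = 1 by norm_num] at h
      have := abs_lt.mp h
      linarith [this.1]
    refine ⟨hx, ?_, ?_⟩
    · simp only [eu3, euPair, ← sq_lt_sq] at h ⊢
      split_ifs <;> nlinarith [sq_nonneg (x + 3), sq_nonneg (x - 3)]
    · simp only [eu3, euPair, ← sq_lt_sq] at h ⊢
      split_ifs <;> nlinarith [sq_nonneg (x + 3), sq_nonneg (x - 3)]
  · intro x
    simp only [eu3, euPair, ← sq_lt_sq] at *
    split_ifs at * <;> nlinarith [sq_nonneg (x + 3), sq_nonneg (x - 3)]
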